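/- Let Γ be a distance-biregular graph. Then Γ has the M-property if and only if Σ_{j=1}^{D₀−1} (1/(k_{0,j}·b_{0,j}))·(Σ_{i=j+1}^{D₀} k_{0,i})² ≤ (n−1)/k₀. -/

import Mathlib

open Finset SimpleGraph Matrix
open Fin.NatCast Fin.CommRing

lemma fin2_succ_of_ne : ∀ a bb : Fin 2, a ≠ bb → bb = a + 1 := by decide

lemma fin2_cases : ∀ a : Fin 2, a = 0 ∨ a = 1 := by decide

noncomputable def auxS (kk : ℕ → ℕ) (Dl j : ℕ) : ℝ := ∑ i ∈ Finset.Icc (j + 1) Dl, (kk i : ℝ)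

noncomputable def auxh (n : ℕ) (kk bb : ℕ → ℕ) (Dl j : ℕ) : ℝ :=
  auxS kk Dl j / (n * kk j * bb j)

noncomputable def auxg (n : ℕ) (kk bb : ℕ → ℕ) (Dl i : ℕ) : ℝ :=
  (1 / n) * (∑ j ∈ Finset.range Dl, auxh n kk bb Dl j * auxS kk Dl j) -
    ∑ j ∈ Finset.range (min i Dl), auxh n kk bb Dl j

lemma auxh_nonneg (n : ℕ) (kk bb : ℕ → ℕ) (Dl j : ℕ) : 0 ≤ auxh n kk bb Dl j := by
  unfold auxh auxS
  apply div_nonneg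
  · positivity
  · positivity

lemma auxg_diff (n : ℕ) (kk bb : ℕ → ℕ) (Dl i : ℕ) (h : i < Dl) :
    auxg n kk bb Dl i - auxg n kk bb Dl (i + 1) = auxh n kk bb Dl i := by
  unfold auxg
  rw [min_eq_left (by omega), min_eq_left (by omega), Finset.sum_range_succ]
  ring

lemma auxg_mono (n : ℕ) (kk bb : ℕ → ℕ) (Dl : ℕ) {i i' : ℕ} (h : i ≤ i') :
    auxg n kk bb Dl i' ≤ auxg n kk bb Dl i := by
  unfold auxg
  have hsub : Finset.range (min i Dl) ⊆ Finset.range (min i' Dl) := by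
    apply Finset.range_subset_range.mpr; omega
  have := Finset.sum_le_sum_of_subset_of_nonneg hsub
    (fun j _ _ => auxh_nonneg n kk bb Dl j)
  linarith

lemma auxS_self (kk : ℕ → ℕ) (N : ℕ) : auxS kk N N = 0 := by
  unfold auxS
  rw [Finset.Icc_eq_empty (by omega), Finset.sum_empty]

lemma triangle_swap (F : ℕ → ℝ) (K : ℕ → ℝ) (N : ℕ) :
    ∑ i ∈ Finset.range (N + 1), K i * ∑ j ∈ Finset.range i, F j
      = ∑ j ∈ Finset.range (N + 1), F j * ∑ i ∈ Finset.Icc (j + 1) N, K i := by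
  have step1 : ∀ i ∈ Finset.range (N + 1),
      K i * ∑ j ∈ Finset.range i, F j
        = ∑ j ∈ Finset.range (N + 1), (if j < i then K i * F j else 0) := by
    intro i hi
    have hfil : (Finset.range (N + 1)).filter (fun j => j < i) = Finset.range i := by
      ext j
      simp only [Finset.mem_filter, Finset.mem_range]
      have := Finset.mem_range.mp hi
      omega
    rw [← Finset.sum_filter, hfil, Finset.mul_sum]
  rw [Finset.sum_congr rfl step1, Finset.sum_comm]
  refine Finset.sum_congr rfl (fun j hj => ?_)
  have hfil : (Finset.range (N + 1)).filter (fun i => j < i) = Finset.Icc (j + 1) N := by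
    ext i
    simp only [Finset.mem_filter, Finset.mem_range, Finset.mem_Icc]
    omega
  rw [← Finset.sum_filter, hfil, Finset.mul_sum]
  exact Finset.sum_congr rfl (fun i _ => mul_comm _ _)

lemma auxg_zero_sum (n : ℕ) (hn : (n : ℝ) ≠ 0) (kk bb : ℕ → ℕ) (N : ℕ)
    (hksum : ∑ i ∈ Finset.range (N + 1), (kk i : ℝ) = n) :
    ∑ i ∈ Finset.range (N + 1), (kk i : ℝ) * auxg n kk bb N i = 0 := by
  have hmin : ∀ i ∈ Finset.range (N + 1), min i N = i := by
    intro i hi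
    have := Finset.mem_range.mp hi
    omega
  have h1 : ∑ i ∈ Finset.range (N + 1), (kk i : ℝ) * auxg n kk bb N i
      = (∑ i ∈ Finset.range (N + 1), (kk i : ℝ)) *
          ((1 / n) * ∑ j ∈ Finset.range N, auxh n kk bb N j * auxS kk N j)
        - ∑ i ∈ Finset.range (N + 1), (kk i : ℝ) * ∑ j ∈ Finset.range i, auxh n kk bb N j := by
    rw [Finset.sum_mul, ← Finset.sum_sub_distrib]
    refine Finset.sum_congr rfl (fun i hi => ?_)
    unfold auxg
    rw [hmin i hi]
    ring
  rw [h1, triangle_swap (auxh n kk bb N) (fun i => (kk i : ℝ)) N, hksum]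
  have h2 : ∑ j ∈ Finset.range (N + 1), auxh n kk bb N j * ∑ i ∈ Finset.Icc (j + 1) N, (kk i : ℝ)
      = ∑ j ∈ Finset.range N, auxh n kk bb N j * auxS kk N j := by
    rw [Finset.sum_range_succ]
    have : ∑ i ∈ Finset.Icc (N + 1) N, (kk i : ℝ) = 0 := by
      rw [Finset.Icc_eq_empty (by omega), Finset.sum_empty]
    rw [this, mul_zero, add_zero]
    exact Finset.sum_congr rfl (fun j _ => rfl)
  rw [h2]
  field_simp
  ring

lemma matrix_unique_ginv {V : Type} [Fintype V] [DecidableEq V]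
    (L X M J : Matrix V V ℝ)
    (hLsym : Lᵀ = L) (hJsym : Jᵀ = J)
    (hLJ : L * J = 0) (hJL : J * L = 0)
    (hX1 : L * X * L = L) (hX2 : X * L * X = X) (hX3 : L * X = X * L)
    (hML : M * L = 1 - J) (hMJ : M * J = 0) :
    X = M ∧ Mᵀ = M := by
  have hJM : J * Mᵀ = 0 := by
    calc J * Mᵀ = Jᵀ * Mᵀ := by rw [hJsym]
    _ = (M * J)ᵀ := by rw [Matrix.transpose_mul]
    _ = 0 := by rw [hMJ, Matrix.transpose_zero]
  have hLMT : L * Mᵀ = 1 - J := by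
    have h := congrArg Matrix.transpose hML
    rwa [Matrix.transpose_mul, hLsym, Matrix.transpose_sub, Matrix.transpose_one, hJsym] at h
  have hMT : Mᵀ = M := by
    symm
    calc M = M * (1 - J) := by rw [mul_sub, mul_one, hMJ, sub_zero]
    _ = M * (L * Mᵀ) := by rw [hLMT]
    _ = M * L * Mᵀ := by rw [mul_assoc]
    _ = (1 - J) * Mᵀ := by rw [hML]
    _ = Mᵀ - J * Mᵀ := by rw [sub_mul, one_mul]
    _ = Mᵀ := by rw [hJM, sub_zero]
  have hJM' : J * M = 0 := by rw [← hMT]; exact hJM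
  have hLM : L * M = 1 - J := by rw [← hMT]; exact hLMT
  have hM1 : L * M * L = L := by rw [hLM, sub_mul, one_mul, hJL, sub_zero]
  have hM2 : M * L * M = M := by rw [hML, sub_mul, one_mul, hJM', sub_zero]
  have hM3 : L * M = M * L := by rw [hLM, hML]
  have f1 : X = L * X * X := by
    calc X = X * L * X := hX2.symm
    _ = (L * X) * X := by rw [hX3]
    _ = L * X * X := by rw [mul_assoc]
  have f2 : X = L * M * X := by
    calc X = L * X * X := f1
    _ = (L * M * L) * X * X := by rw [hM1]
    _ = L * M * (L * X * X) := by simp only [mul_assoc]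
    _ = L * M * X := by rw [← f1]
  have f3 : X = M * X * L := by
    calc X = L * M * X := f2
    _ = (M * L) * X := by rw [hM3]
    _ = M * (L * X) := by rw [mul_assoc]
    _ = M * (X * L) := by rw [hX3]
    _ = M * X * L := by rw [mul_assoc]
  have g1 : M = M * M * L := by
    calc M = M * L * M := hM2.symm
    _ = M * (L * M) := by rw [mul_assoc]
    _ = M * (M * L) := by rw [hM3]
    _ = M * M * L := by rw [mul_assoc]
  have f4 : M = M * X * L := by
    calc M = M * M * L := g1
    _ = M * M * (L * X * L) := by rw [hX1]
    _ = (M * M * L) * (X * L) := by simp only [mul_assoc]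
    _ = M * (X * L) := by rw [← g1]
    _ = M * X * L := by rw [mul_assoc]
  exact ⟨f3.trans f4.symm, hMT⟩

theorem stmt15 {V : Type} [Fintype V] [DecidableEq V]
    (G : SimpleGraph V) [DecidableRel G.Adj]
    (hconn : G.Connected) (hcard : 2 ≤ Fintype.card V)
    (σ : V → Fin 2)
    (hbip : ∀ x y : V, G.Adj x y → σ x ≠ σ y)
    (k : Fin 2 → ℕ)
    (hdeg : ∀ x : V, G.degree x = k (σ x))
    (c b : Fin 2 → ℕ → ℕ)
    (hc : ∀ (x y : V) (i : ℕ), G.dist x y = i →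
      (Finset.univ.filter (fun z => G.dist x z = i - 1 ∧ G.Adj y z)).card = c (σ x) i)
    (hb : ∀ (x y : V) (i : ℕ), G.dist x y = i →
      (Finset.univ.filter (fun z => G.dist x z = i + 1 ∧ G.Adj y z)).card = b (σ x) i)
    (D : Fin 2 → ℕ)
    (hDub : ∀ x y : V, G.dist x y ≤ D (σ x))
    (hDmax : ∀ ℓ : Fin 2, ∃ x y : V, σ x = ℓ ∧ G.dist x y = D ℓ)
    (hD0 : 1 ≤ D 0) (hD01 : D 0 ≤ D 1)
    (kk : Fin 2 → ℕ → ℕ)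
    (hkk : ∀ (x : V) (i : ℕ),
      (Finset.univ.filter (fun y => G.dist x y = i)).card = kk (σ x) i)
    (Lsharp : Matrix V V ℝ)
    (hLs1 : G.lapMatrix ℝ * Lsharp * G.lapMatrix ℝ = G.lapMatrix ℝ)
    (hLs2 : Lsharp * G.lapMatrix ℝ * Lsharp = Lsharp)
    (hLs3 : G.lapMatrix ℝ * Lsharp = Lsharp * G.lapMatrix ℝ) :
    (∀ x y : V, x ≠ y → Lsharp x y ≤ 0) ↔
      ∑ j ∈ Finset.Icc 1 (D 0 - 1),
        (1 / ((kk 0 j : ℝ) * (b 0 j : ℝ))) *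
          (∑ i ∈ Finset.Icc (j + 1) (D 0), (kk 0 i : ℝ)) ^ 2 ≤
        ((Fintype.card V : ℝ) - 1) / (k 0 : ℝ) := by
  have fin2_succ_of_ne : ∀ a bb : Fin 2, a ≠ bb → bb = a + 1 := by decide
  have hwalkpar : ∀ (x y : V) (p : G.Walk x y), σ y = σ x + (p.length : Fin 2) := by
    intro x y p
    induction p with
    | nil => simp
    | @cons u v w h q ih =>
      have h2 : σ v = σ u + 1 := fin2_succ_of_ne _ _ (hbip u v h)
      rw [Walk.length_cons, ih, h2]
      push_cast
      ring
  have hpar : ∀ x y : V, σ y = σ x + (G.dist x y : Fin 2) := by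
    intro x y
    obtain ⟨p, hp⟩ := hconn.exists_walk_length_eq_dist x y
    rw [← hp]
    exact hwalkpar x y p
  have hdist0 : ∀ x y : V, G.dist x y = 0 ↔ x = y := fun x y => hconn.dist_eq_zero_iff
  have hdistne : ∀ x y z : V, G.Adj y z → G.dist x z ≠ G.dist x y := by
    intro x y z ha hEq
    apply hbip y z ha
    have h1 := hpar x y
    have h2 := hpar x z
    rw [h1, h2, hEq]
  have htri : ∀ x y z : V, G.Adj y z → G.dist x z = G.dist x y + 1 ∨ G.dist x z + 1 = G.dist x y := by
    intro x y z ha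
    have hyz : G.dist y z = 1 := dist_eq_one_iff_adj.mpr ha
    have hzy : G.dist z y = 1 := dist_eq_one_iff_adj.mpr ha.symm
    have h1 : G.dist x z ≤ G.dist x y + 1 := by
      have := hconn.dist_triangle (u := x) (v := y) (w := z); omega
    have h2 : G.dist x y ≤ G.dist x z + 1 := by
      have := hconn.dist_triangle (u := x) (v := z) (w := y); omega
    have h3 := hdistne x y z ha
    omega
  have hpred : ∀ (x z : V) (m : ℕ), G.dist x z = m + 1 → ∃ w : V, G.Adj z w ∧ G.dist x w = m := by
    intro x z m hd
    obtain ⟨p, hp⟩ := hconn.exists_walk_length_eq_dist z x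
    have hpl : p.length = m + 1 := by rw [hp, SimpleGraph.dist_comm]; exact hd
    cases p with
    | nil => simp at hpl
    | @cons u v w h r =>
      refine ⟨v, h, ?_⟩
      have hrl : r.length = m := by simpa using hpl
      have hle : G.dist x v ≤ m := by
        have := G.dist_le r.reverse
        rwa [Walk.length_reverse, hrl] at this
      have hge : m ≤ G.dist x v := by
        have h1 : G.dist x z ≤ G.dist x v + 1 := by
          have hvz : G.dist v z = 1 := dist_eq_one_iff_adj.mpr h.symm
          have := hconn.dist_triangle (u := x) (v := v) (w := z); omega
        omega
      omega
  have hinter : ∀ (m : ℕ) (x z : V), G.dist x z = m → ∀ d, d ≤ m → ∃ w, G.dist x w = d := by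
    intro m
    induction m with
    | zero =>
      intro x z _ d hd
      have : d = 0 := by omega
      exact ⟨x, by simp [this]⟩
    | succ m ih =>
      intro x z h d hd
      rcases Nat.eq_or_lt_of_le hd with h' | h'
      · exact ⟨z, by omega⟩
      · obtain ⟨w, _, hw⟩ := hpred x z m h
        exact ih x w hw d (by omega)
  set n := Fintype.card V with hn
  -- anchors
  have hanchor : ∀ ℓ : Fin 2, ∃ x : V, σ x = ℓ ∧ ∀ d, d ≤ D ℓ → ∃ z, G.dist x z = d := by
    intro ℓ
    obtain ⟨x, y, hx, hy⟩ := hDmax ℓ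
    exact ⟨x, hx, fun d hd => hinter (D ℓ) x y hy d hd⟩
  have hD1 : ∀ ℓ : Fin 2, 1 ≤ D ℓ := by
    intro ℓ
    have h2 : ℓ = 0 ∨ ℓ = 1 := by omega
    rcases h2 with h | h <;> subst h <;> omega
  have kk0 : ∀ ℓ : Fin 2, kk ℓ 0 = 1 := by
    intro ℓ
    obtain ⟨x, hx, -⟩ := hanchor ℓ
    rw [← hx, ← hkk x 0]
    rw [show (Finset.univ.filter (fun y => G.dist x y = 0)) = {x} by
      ext y
      simp only [Finset.mem_filter, Finset.mem_univ, true_and, Finset.mem_singleton]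
      rw [hdist0 x y]
      exact eq_comm]
    simp
  have ksum : ∀ ℓ : Fin 2, ∑ i ∈ Finset.range (D ℓ + 1), kk ℓ i = n := by
    intro ℓ
    obtain ⟨x, hx, -⟩ := hanchor ℓ
    have hmaps : ∀ y ∈ Finset.univ, G.dist x y ∈ Finset.range (D ℓ + 1) := by
      intro y _
      have := hDub x y
      rw [hx] at this
      exact Finset.mem_range.mpr (by omega)
    have h2 := Finset.card_eq_sum_card_fiberwise hmaps
    rw [Finset.card_univ] at h2
    rw [hn, h2]
    apply Finset.sum_congr rfl
    intro i _
    rw [← hx]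
    exact (hkk x i).symm
  have kkpos : ∀ (ℓ : Fin 2) (d : ℕ), d ≤ D ℓ → 1 ≤ kk ℓ d := by
    intro ℓ d hd
    obtain ⟨x, hx, hex⟩ := hanchor ℓ
    obtain ⟨z, hz⟩ := hex d hd
    rw [← hx, ← hkk x d]
    apply Finset.card_pos.mpr
    exact ⟨z, by simp [hz]⟩
  have hcount : ∀ (ℓ : Fin 2) (d : ℕ), kk ℓ d * b ℓ d = kk ℓ (d + 1) * c ℓ (d + 1) := by
    intro ℓ d
    obtain ⟨x, hx, -⟩ := hanchor ℓ
    calc kk ℓ d * b ℓ d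
        = ∑ _y ∈ Finset.univ.filter (fun y => G.dist x y = d), b ℓ d := by
          rw [Finset.sum_const, smul_eq_mul, hkk x d, hx]
      _ = ∑ y ∈ Finset.univ.filter (fun y => G.dist x y = d), ∑ z : V,
            (if G.dist x z = d + 1 ∧ G.Adj y z then 1 else 0) := by
          refine Finset.sum_congr rfl (fun y hy => ?_)
          rw [← Finset.card_filter, hb x y d (by simpa using hy), hx]
      _ = ∑ z : V, ∑ y ∈ Finset.univ.filter (fun y => G.dist x y = d),
            (if G.dist x z = d + 1 ∧ G.Adj y z then 1 else 0) := Finset.sum_comm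
      _ = ∑ z : V, (if G.dist x z = d + 1 then c ℓ (d + 1) else 0) := by
          refine Finset.sum_congr rfl (fun z _ => ?_)
          by_cases hz : G.dist x z = d + 1
          · simp only [hz, true_and, if_true]
            rw [← hx, ← hc x z (d + 1) hz, Nat.add_sub_cancel,
              ← Finset.card_filter, Finset.filter_filter]
            congr 1
            ext w
            simp only [Finset.mem_filter, Finset.mem_univ, true_and]
            exact and_congr_right (fun _ => ⟨fun h => h.symm, fun h => h.symm⟩)
          · simp [hz]
      _ = kk ℓ (d + 1) * c ℓ (d + 1) := by
          rw [← Finset.sum_filter, Finset.sum_const, smul_eq_mul, hkk x (d + 1), hx]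
  have hbD : ∀ ℓ : Fin 2, b ℓ (D ℓ) = 0 := by
    intro ℓ
    obtain ⟨x, y, hx, hy⟩ := hDmax ℓ
    have heq := hb x y (D ℓ) hy
    rw [hx] at heq
    rw [← heq, Finset.card_eq_zero]
    apply Finset.filter_eq_empty_iff.mpr
    intro z _
    intro hcontra
    have := hDub x z
    rw [hx] at this
    omega
  have hdistself : ∀ x : V, G.dist x x = 0 := fun x => (hdist0 x x).mpr rfl
  have hb0 : ∀ ℓ : Fin 2, b ℓ 0 = k ℓ := by
    intro ℓ
    obtain ⟨x, hx, -⟩ := hanchor ℓ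
    rw [← hx, ← hb x x 0 (hdistself x), ← hdeg x]
    rw [show Finset.univ.filter (fun z => G.dist x z = 0 + 1 ∧ G.Adj x z)
        = G.neighborFinset x by
      ext z
      simp only [Finset.mem_filter, Finset.mem_univ, true_and, mem_neighborFinset,
        zero_add, and_iff_right_iff_imp]
      intro hz
      exact dist_eq_one_iff_adj.mpr hz]
    rfl
  have hc0 : ∀ ℓ : Fin 2, c ℓ 0 = 0 := by
    intro ℓ
    obtain ⟨x, hx, -⟩ := hanchor ℓ
    rw [← hx, ← hc x x 0 (hdistself x), Finset.card_eq_zero]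
    apply Finset.filter_eq_empty_iff.mpr
    intro z _
    intro hcontra
    obtain ⟨h1, h2⟩ := hcontra
    rw [Nat.zero_sub, hdist0] at h1
    subst h1
    exact G.irrefl h2
  have hcpos : ∀ (ℓ : Fin 2) (d : ℕ), 1 ≤ d → d ≤ D ℓ → 1 ≤ c ℓ d := by
    intro ℓ d hd1 hd2
    obtain ⟨x, hx, hex⟩ := hanchor ℓ
    obtain ⟨z, hz⟩ := hex d hd2
    obtain ⟨e, rfl⟩ : ∃ e, d = e + 1 := ⟨d - 1, by omega⟩
    obtain ⟨w, hw1, hw2⟩ := hpred x z e hz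
    rw [← hx, ← hc x z (e + 1) hz]
    apply Finset.card_pos.mpr
    exact ⟨w, by simp [hw1, hw2]⟩
  have hbpos : ∀ (ℓ : Fin 2) (d : ℕ), d < D ℓ → 1 ≤ b ℓ d := by
    intro ℓ d hd
    have h1 := hcount ℓ d
    have h2 := kkpos ℓ (d + 1) (by omega)
    have h3 := hcpos ℓ (d + 1) (by omega) (by omega)
    have h4 := kkpos ℓ d (by omega)
    by_contra hb'
    have : b ℓ d = 0 := by omega
    rw [this, Nat.mul_zero] at h1
    have := Nat.mul_pos (by omega : 0 < kk ℓ (d+1)) (by omega : 0 < c ℓ (d+1))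
    omega
  have hkpos : ∀ ℓ : Fin 2, 1 ≤ k ℓ := by
    intro ℓ
    have := hbpos ℓ 0 (by have := hD1 ℓ; omega)
    rw [hb0 ℓ] at this
    exact this
  -- neighbor sum decomposition
  have hnsum : ∀ (x y : V) (f : ℕ → ℝ),
      ∑ z ∈ G.neighborFinset y, f (G.dist x z) =
        (c (σ x) (G.dist x y) : ℝ) * f (G.dist x y - 1) +
        (b (σ x) (G.dist x y) : ℝ) * f (G.dist x y + 1) := by
    intro x y f
    set d := G.dist x y with hd
    have hsplit : G.neighborFinset y =
        ((G.neighborFinset y).filter (fun z => G.dist x z = d - 1)) ∪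
        ((G.neighborFinset y).filter (fun z => G.dist x z = d + 1)) := by
      ext z
      simp only [Finset.mem_union, Finset.mem_filter, mem_neighborFinset]
      constructor
      · intro hz
        rcases htri x y z hz with h | h
        · exact Or.inr ⟨hz, h⟩
        · exact Or.inl ⟨hz, by omega⟩
      · rintro (⟨hz, -⟩ | ⟨hz, -⟩) <;> exact hz
    have hdisj : Disjoint
        ((G.neighborFinset y).filter (fun z => G.dist x z = d - 1))
        ((G.neighborFinset y).filter (fun z => G.dist x z = d + 1)) := by
      apply Finset.disjoint_filter_filter'
      rw [disjoint_iff_inf_le]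
      intro z hz
      simp only [Pi.inf_apply, inf_Prop_eq] at hz
      omega
    have hcard1 : ((G.neighborFinset y).filter (fun z => G.dist x z = d - 1)).card
        = c (σ x) d := by
      rw [← hc x y d hd.symm]
      congr 1
      ext z
      simp only [Finset.mem_filter, mem_neighborFinset, Finset.mem_univ, true_and]
      constructor
      · rintro ⟨h1, h2⟩; exact ⟨h2, h1⟩
      · rintro ⟨h1, h2⟩; exact ⟨h2, h1⟩
    have hcard2 : ((G.neighborFinset y).filter (fun z => G.dist x z = d + 1)).card
        = b (σ x) d := by
      rw [← hb x y d hd.symm]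
      congr 1
      ext z
      simp only [Finset.mem_filter, mem_neighborFinset, Finset.mem_univ, true_and]
      constructor
      · rintro ⟨h1, h2⟩; exact ⟨h2, h1⟩
      · rintro ⟨h1, h2⟩; exact ⟨h2, h1⟩
    have e1 : ∑ z ∈ ((G.neighborFinset y).filter (fun z => G.dist x z = d - 1)),
        f (G.dist x z) = (c (σ x) d : ℝ) * f (d - 1) := by
      have hcg : ∀ z ∈ (G.neighborFinset y).filter (fun z => G.dist x z = d - 1),
          f (G.dist x z) = f (d - 1) := fun z hz => by rw [(Finset.mem_filter.mp hz).2]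
      rw [Finset.sum_congr rfl hcg, Finset.sum_const, hcard1, nsmul_eq_mul]
    have e2 : ∑ z ∈ ((G.neighborFinset y).filter (fun z => G.dist x z = d + 1)),
        f (G.dist x z) = (b (σ x) d : ℝ) * f (d + 1) := by
      have hcg : ∀ z ∈ (G.neighborFinset y).filter (fun z => G.dist x z = d + 1),
          f (G.dist x z) = f (d + 1) := fun z hz => by rw [(Finset.mem_filter.mp hz).2]
      rw [Finset.sum_congr rfl hcg, Finset.sum_const, hcard2, nsmul_eq_mul]
    rw [hsplit, Finset.sum_union hdisj, e1, e2]
  have hn0 : (0:ℝ) < (n:ℝ) := by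
    have : 0 < n := by omega
    exact_mod_cast this
  have hnne : (n:ℝ) ≠ 0 := ne_of_gt hn0
  have hSsplit : ∀ (ℓ : Fin 2) (j : ℕ), j ≤ D ℓ →
      auxS (kk ℓ) (D ℓ) j = (n:ℝ) - ∑ i ∈ Finset.range (j+1), (kk ℓ i : ℝ) := by
    intro ℓ j hj
    have h1 : ∑ i ∈ Finset.range (j+1), (kk ℓ i:ℝ)
        + ∑ i ∈ Finset.Ico (j+1) (D ℓ+1), (kk ℓ i:ℝ)
        = ∑ i ∈ Finset.range (D ℓ+1), (kk ℓ i:ℝ) :=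
      Finset.sum_range_add_sum_Ico _ (by omega)
    have h2 : ∑ i ∈ Finset.range (D ℓ+1), (kk ℓ i:ℝ) = (n:ℝ) := by
      rw [← ksum ℓ]
      push_cast
      ring
    unfold auxS
    rw [← Finset.Ico_add_one_right_eq_Icc]
    linarith
  have hS0 : ∀ ℓ, auxS (kk ℓ) (D ℓ) 0 = (n:ℝ) - 1 := by
    intro ℓ
    rw [hSsplit ℓ 0 (by have := hD1 ℓ; omega), Finset.sum_range_one, kk0 ℓ, Nat.cast_one]
  have hSstep : ∀ (ℓ : Fin 2) (j : ℕ), j + 1 ≤ D ℓ →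
      auxS (kk ℓ) (D ℓ) j = (kk ℓ (j+1) : ℝ) + auxS (kk ℓ) (D ℓ) (j+1) := by
    intro ℓ j hj
    rw [hSsplit ℓ j (by omega), hSsplit ℓ (j+1) hj,
      Finset.sum_range_succ (fun i => (kk ℓ i : ℝ)) (j+1)]
    ring
  have hSnn : ∀ (ℓ : Fin 2) (j : ℕ), 0 ≤ auxS (kk ℓ) (D ℓ) j := by
    intro ℓ j
    unfold auxS
    positivity
  have hkey : ∀ (ℓ : Fin 2) (e : ℕ), e + 1 ≤ D ℓ →
      (c ℓ (e+1) : ℝ) * auxh n (kk ℓ) (b ℓ) (D ℓ) e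
        - (b ℓ (e+1) : ℝ) * auxh n (kk ℓ) (b ℓ) (D ℓ) (e+1) = 1 / n := by
    intro ℓ e he
    have hkkd : 1 ≤ kk ℓ (e+1) := kkpos ℓ (e+1) he
    have hcd : 1 ≤ c ℓ (e+1) := hcpos ℓ (e+1) (by omega) he
    have hkkdne : (kk ℓ (e+1) : ℝ) ≠ 0 := Nat.cast_ne_zero.mpr (by omega)
    have hcdne : (c ℓ (e+1) : ℝ) ≠ 0 := Nat.cast_ne_zero.mpr (by omega)
    have hcnt : (kk ℓ e : ℝ) * (b ℓ e : ℝ) = (kk ℓ (e+1) : ℝ) * (c ℓ (e+1) : ℝ) := by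
      exact_mod_cast congrArg (Nat.cast (R := ℝ)) (hcount ℓ e)
    unfold auxh
    have hden : (n:ℝ) * kk ℓ e * b ℓ e = n * ((kk ℓ (e+1):ℝ) * (c ℓ (e+1):ℝ)) := by
      rw [mul_assoc, hcnt]
    rcases eq_or_lt_of_le he with hD | hD
    · have hbz : (b ℓ (e+1) : ℝ) = 0 := by rw [hD, hbD ℓ]; norm_num
      have hSe : auxS (kk ℓ) (D ℓ) e = (kk ℓ (e+1) : ℝ) := by
        rw [hSstep ℓ e he, hD, auxS_self, add_zero]
      rw [hbz, hSe, hden, zero_mul, sub_zero]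
      field_simp
    · have hb1 : 1 ≤ b ℓ (e+1) := hbpos ℓ (e+1) hD
      have hb1ne : (b ℓ (e+1) : ℝ) ≠ 0 := Nat.cast_ne_zero.mpr (by omega)
      rw [hSstep ℓ e he, hden]
      field_simp
      ring
  -- cast of ksum
  have ksumR : ∀ ℓ : Fin 2, ∑ i ∈ Finset.range (D ℓ + 1), (kk ℓ i : ℝ) = (n:ℝ) := by
    intro ℓ
    rw [← ksum ℓ]
    push_cast
    ring
  have hzero : ∀ ℓ : Fin 2,
      ∑ i ∈ Finset.range (D ℓ + 1), (kk ℓ i : ℝ) * auxg n (kk ℓ) (b ℓ) (D ℓ) i = 0 :=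
    fun ℓ => auxg_zero_sum n hnne (kk ℓ) (b ℓ) (D ℓ) (ksumR ℓ)
  -- the matrices
  set J : Matrix V V ℝ := Matrix.of (fun _ _ => (1/(n:ℝ))) with hJdef
  set M : Matrix V V ℝ :=
    Matrix.of (fun x y => auxg n (kk (σ x)) (b (σ x)) (D (σ x)) (G.dist x y)) with hMdef
  have hMapp : ∀ x y : V, M x y = auxg n (kk (σ x)) (b (σ x)) (D (σ x)) (G.dist x y) :=
    fun x y => rfl
  have hJapp : ∀ x y : V, J x y = 1/(n:ℝ) := fun x y => rfl
  -- row sums of M vanish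
  have hrowM : ∀ x : V, ∑ z : V, M x z = 0 := by
    intro x
    have hmaps : ∀ z ∈ Finset.univ, G.dist x z ∈ Finset.range (D (σ x) + 1) := by
      intro z _
      exact Finset.mem_range.mpr (by have := hDub x z; omega)
    have hfib := Finset.sum_fiberwise_of_maps_to hmaps (fun z => M x z)
    rw [← hfib]
    rw [← hzero (σ x)]
    refine Finset.sum_congr rfl (fun i hi => ?_)
    have hcg : ∀ z ∈ Finset.univ.filter (fun z => G.dist x z = i),
        M x z = auxg n (kk (σ x)) (b (σ x)) (D (σ x)) i := by
      intro z hz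
      rw [hMapp]
      rw [(Finset.mem_filter.mp hz).2]
    rw [Finset.sum_congr rfl hcg, Finset.sum_const, hkk x i, nsmul_eq_mul]
  have hMJ : M * J = 0 := by
    ext x y
    rw [Matrix.mul_apply, Matrix.zero_apply]
    have : ∀ z : V, M x z * J z y = M x z * (1/(n:ℝ)) := fun z => rfl
    rw [Finset.sum_congr rfl (fun z _ => this z), ← Finset.sum_mul, hrowM x, zero_mul]
  have hLJ0 : G.lapMatrix ℝ * J = 0 := by
    ext x y
    rw [Matrix.mul_apply, Matrix.zero_apply]
    have hrow : ∑ z : V, G.lapMatrix ℝ x z = 0 := by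
      have h0 := congrFun (G.lapMatrix_mulVec_const_eq_zero (R := ℝ)) x
      simpa [Matrix.mulVec, dotProduct] using h0
    have : ∀ z : V, G.lapMatrix ℝ x z * J z y = G.lapMatrix ℝ x z * (1/(n:ℝ)) :=
      fun z => rfl
    rw [Finset.sum_congr rfl (fun z _ => this z), ← Finset.sum_mul, hrow, zero_mul]
  have hLsym : (G.lapMatrix ℝ)ᵀ = G.lapMatrix ℝ := G.isSymm_lapMatrix (R := ℝ)
  have hJL0 : J * G.lapMatrix ℝ = 0 := by
    ext x y
    rw [Matrix.mul_apply, Matrix.zero_apply]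
    have hrow : ∑ z : V, G.lapMatrix ℝ y z = 0 := by
      have h0 := congrFun (G.lapMatrix_mulVec_const_eq_zero (R := ℝ)) y
      simpa [Matrix.mulVec, dotProduct] using h0
    have hsymE : ∀ z : V, G.lapMatrix ℝ z y = G.lapMatrix ℝ y z := by
      intro z
      conv_lhs => rw [← hLsym]
      rw [Matrix.transpose_apply]
    have hterm : ∀ z : V, J x z * G.lapMatrix ℝ z y = G.lapMatrix ℝ y z * (1/(n:ℝ)) := by
      intro z
      show (1/(n:ℝ)) * G.lapMatrix ℝ z y = G.lapMatrix ℝ y z * (1/(n:ℝ))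
      rw [hsymE z, mul_comm]
    rw [Finset.sum_congr rfl (fun z _ => hterm z), ← Finset.sum_mul, hrow, zero_mul]
  have hML : M * G.lapMatrix ℝ = 1 - J := by
    ext x y
    rw [Matrix.mul_apply, Matrix.sub_apply, Matrix.one_apply]
    have expand : ∀ z : V, M x z * G.lapMatrix ℝ z y
        = (if z = y then M x z * (G.degree z : ℝ) else 0)
          - (if G.Adj z y then M x z else 0) := by
      intro z
      simp only [lapMatrix, Matrix.sub_apply, degMatrix, Matrix.diagonal_apply,
        adjMatrix_apply]
      split_ifs <;> ring
    rw [Finset.sum_congr rfl (fun z _ => expand z), Finset.sum_sub_distrib]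
    have hfirst : ∑ z : V, (if z = y then M x z * (G.degree z : ℝ) else 0)
        = M x y * (G.degree y : ℝ) := by
      rw [Finset.sum_ite_eq' Finset.univ y (fun z => M x z * (G.degree z : ℝ))]
      simp
    have hsecond : ∑ z : V, (if G.Adj z y then M x z else 0)
        = ∑ z ∈ G.neighborFinset y,
            auxg n (kk (σ x)) (b (σ x)) (D (σ x)) (G.dist x z) := by
      rw [← Finset.sum_filter]
      refine Finset.sum_congr ?_ (fun z _ => rfl)
      ext z
      simp only [Finset.mem_filter, Finset.mem_univ, true_and, mem_neighborFinset]
      exact ⟨fun h => h.symm, fun h => h.symm⟩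
    rw [hfirst, hsecond, hnsum x y (auxg n (kk (σ x)) (b (σ x)) (D (σ x)))]
    rw [hMapp x y, hJapp x y]
    by_cases hxy : x = y
    · subst hxy
      rw [if_pos rfl]
      rw [hdistself x, hc0 (σ x), hb0 (σ x), hdeg x]
      have hg01 : auxg n (kk (σ x)) (b (σ x)) (D (σ x)) 0
          - auxg n (kk (σ x)) (b (σ x)) (D (σ x)) (0 + 1)
          = auxh n (kk (σ x)) (b (σ x)) (D (σ x)) 0 :=
        auxg_diff n (kk (σ x)) (b (σ x)) (D (σ x)) 0 (by have := hD1 (σ x); omega)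
      have hh0 : auxh n (kk (σ x)) (b (σ x)) (D (σ x)) 0
          = ((n:ℝ) - 1) / ((n:ℝ) * 1 * (k (σ x) : ℝ)) := by
        unfold auxh
        rw [hS0 (σ x), kk0 (σ x), hb0 (σ x), Nat.cast_one]
      have hkne : (k (σ x) : ℝ) ≠ 0 := Nat.cast_ne_zero.mpr (by have := hkpos (σ x); omega)
      rw [Nat.cast_zero, zero_mul, zero_add]
      have : (k (σ x) : ℝ) * auxg n (kk (σ x)) (b (σ x)) (D (σ x)) 0
          - (k (σ x) : ℝ) * auxg n (kk (σ x)) (b (σ x)) (D (σ x)) (0 + 1)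
          = (k (σ x) : ℝ) * (((n:ℝ) - 1) / ((n:ℝ) * 1 * (k (σ x) : ℝ))) := by
        rw [← mul_sub, hg01, hh0]
      have hgoal : auxg n (kk (σ x)) (b (σ x)) (D (σ x)) 0 * (k (σ x) : ℝ)
          - (k (σ x) : ℝ) * auxg n (kk (σ x)) (b (σ x)) (D (σ x)) (0 + 1)
          = 1 - 1 / (n:ℝ) := by
        rw [mul_comm (auxg n (kk (σ x)) (b (σ x)) (D (σ x)) 0) ((k (σ x)):ℝ)]
        rw [this]
        field_simp
      linarith [hgoal]
    · rw [if_neg hxy]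
      have hd1 : 1 ≤ G.dist x y := by
        have := hconn.pos_dist_of_ne (u := x) (v := y) hxy
        omega
      obtain ⟨e, he⟩ : ∃ e, G.dist x y = e + 1 := ⟨G.dist x y - 1, by omega⟩
      have hdD : e + 1 ≤ D (σ x) := by
        have := hDub x y
        omega
      rw [he]
      have hdegy : (G.degree y : ℝ) = (c (σ x) (e+1) : ℝ) + (b (σ x) (e+1) : ℝ) := by
        have h1 := hnsum x y (fun _ => (1:ℝ))
        rw [he] at h1
        simp only [mul_one] at h1
        rw [← h1, Finset.sum_const, nsmul_eq_mul, mul_one, card_neighborFinset_eq_degree]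
      have hkey' := hkey (σ x) e hdD
      have he1 : (c (σ x) (e+1) : ℝ) * auxg n (kk (σ x)) (b (σ x)) (D (σ x)) e
          - (c (σ x) (e+1) : ℝ) * auxg n (kk (σ x)) (b (σ x)) (D (σ x)) (e+1)
          = (c (σ x) (e+1) : ℝ) * auxh n (kk (σ x)) (b (σ x)) (D (σ x)) e := by
        rw [← mul_sub, auxg_diff n (kk (σ x)) (b (σ x)) (D (σ x)) e (by omega)]
      have he2 : (b (σ x) (e+1) : ℝ) * auxg n (kk (σ x)) (b (σ x)) (D (σ x)) (e+1)
          - (b (σ x) (e+1) : ℝ) * auxg n (kk (σ x)) (b (σ x)) (D (σ x)) (e+1+1)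
          = (b (σ x) (e+1) : ℝ) * auxh n (kk (σ x)) (b (σ x)) (D (σ x)) (e+1) := by
        rcases eq_or_lt_of_le hdD with hD' | hD'
        · have hbz : (b (σ x) (e+1) : ℝ) = 0 := by rw [hD', hbD (σ x)]; norm_num
          rw [hbz]
          ring
        · rw [← mul_sub, auxg_diff n (kk (σ x)) (b (σ x)) (D (σ x)) (e+1) (by omega)]
      have hsimp1 : e + 1 - 1 = e := by omega
      rw [hsimp1, hdegy]
      linarith [he1, he2, hkey']
  have hJsym : Jᵀ = J := by
    ext x y
    rfl
  obtain ⟨hXM, hMsym⟩ := matrix_unique_ginv (G.lapMatrix ℝ) Lsharp M J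
    hLsym hJsym hLJ0 hJL0 hLs1 hLs2 hLs3 hML hMJ
  -- an edge from the 0 side
  obtain ⟨x0, hx0, hex0⟩ := hanchor 0
  obtain ⟨z0, hz0⟩ := hex0 1 hD0
  have hadj0 : G.Adj x0 z0 := dist_eq_one_iff_adj.mp hz0
  have hx0ne : x0 ≠ z0 := by
    intro h
    rw [h, hdistself] at hz0
    omega
  have hσz0 : σ z0 = 1 := by
    have h1 := hbip x0 z0 hadj0
    rw [hx0] at h1
    rcases fin2_cases (σ z0) with h | h
    · exact absurd h.symm h1
    · exact h
  have hMval0 : M x0 z0 = auxg n (kk 0) (b 0) (D 0) 1 := by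
    rw [hMapp, hx0, hz0]
  have hMval1 : M z0 x0 = auxg n (kk 1) (b 1) (D 1) 1 := by
    rw [hMapp, hσz0, SimpleGraph.dist_comm, hz0]
  have hg11 : auxg n (kk 1) (b 1) (D 1) 1 = auxg n (kk 0) (b 0) (D 0) 1 := by
    have h1 : Mᵀ x0 z0 = M x0 z0 := by rw [hMsym]
    rw [Matrix.transpose_apply, hMval0, hMval1] at h1
    exact h1
  -- the target quantity
  set T := ∑ j ∈ Finset.Icc 1 (D 0 - 1),
      (1 / ((kk 0 j : ℝ) * (b 0 j : ℝ))) *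
        (∑ i ∈ Finset.Icc (j + 1) (D 0), (kk 0 i : ℝ)) ^ 2 with hT
  have hTalt : T = ∑ j ∈ Finset.Icc 1 (D 0 - 1),
      (1 / ((kk 0 j : ℝ) * (b 0 j : ℝ))) * (auxS (kk 0) (D 0) j) ^ 2 := rfl
  have hk0ne : (k 0 : ℝ) ≠ 0 := Nat.cast_ne_zero.mpr (by have := hkpos 0; omega)
  have hg1eq : auxg n (kk 0) (b 0) (D 0) 1 = (T - ((n:ℝ) - 1)/(k 0 : ℝ)) / (n:ℝ)^2 := by
    unfold auxg
    rw [min_eq_left hD0, Finset.sum_range_one]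
    have hsplit : ∑ j ∈ Finset.range (D 0),
        auxh n (kk 0) (b 0) (D 0) j * auxS (kk 0) (D 0) j
        = auxh n (kk 0) (b 0) (D 0) 0 * auxS (kk 0) (D 0) 0
          + ∑ j ∈ Finset.Ico 1 (D 0),
              auxh n (kk 0) (b 0) (D 0) j * auxS (kk 0) (D 0) j := by
      rw [Finset.range_eq_Ico, Finset.sum_eq_sum_Ico_succ_bot (by omega : 0 < D 0)]
    have hIcoIcc : Finset.Ico 1 (D 0) = Finset.Icc 1 (D 0 - 1) := by
      rw [← Finset.Ico_add_one_right_eq_Icc]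
      congr 1
      omega
    have hterm : ∀ j : ℕ, auxh n (kk 0) (b 0) (D 0) j * auxS (kk 0) (D 0) j
        = (1/(n:ℝ)) * ((1 / ((kk 0 j : ℝ) * (b 0 j : ℝ))) * (auxS (kk 0) (D 0) j) ^ 2) := by
      intro j
      unfold auxh
      ring
    have hTsum : ∑ j ∈ Finset.Ico 1 (D 0),
        auxh n (kk 0) (b 0) (D 0) j * auxS (kk 0) (D 0) j = (1/(n:ℝ)) * T := by
      rw [hTalt, ← hIcoIcc, Finset.mul_sum]
      exact Finset.sum_congr rfl (fun j _ => hterm j)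
    have hh0 : auxh n (kk 0) (b 0) (D 0) 0 = ((n:ℝ) - 1) / ((n:ℝ) * 1 * (k 0 : ℝ)) := by
      unfold auxh
      rw [hS0 0, kk0 0, hb0 0, Nat.cast_one]
    rw [hsplit, hTsum, hh0, hS0 0]
    field_simp
    ring
  have hn2pos : (0:ℝ) < (n:ℝ)^2 := by positivity
  have hiff : auxg n (kk 0) (b 0) (D 0) 1 ≤ 0 ↔ T ≤ ((n:ℝ) - 1)/(k 0 : ℝ) := by
    rw [hg1eq]
    constructor
    · intro h
      by_contra hcon
      push_neg at hcon
      have hpos : 0 < (T - ((n:ℝ) - 1)/(k 0 : ℝ)) / (n:ℝ)^2 :=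
        div_pos (by linarith) hn2pos
      linarith
    · intro h
      exact div_nonpos_iff.mpr (Or.inr ⟨by linarith, le_of_lt hn2pos⟩)
  constructor
  · intro hLe
    have h1 : auxg n (kk 0) (b 0) (D 0) 1 ≤ 0 := by
      have h2 := hLe x0 z0 hx0ne
      rw [hXM, hMval0] at h2
      exact h2
    exact hiff.mp h1
  · intro hineq x y hxy
    rw [hXM]
    have hg1le : auxg n (kk 0) (b 0) (D 0) 1 ≤ 0 := hiff.mpr hineq
    have hd1 : 1 ≤ G.dist x y := by
      have := hconn.pos_dist_of_ne (u := x) (v := y) hxy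
      omega
    have hmono := auxg_mono n (kk (σ x)) (b (σ x)) (D (σ x)) hd1
    have hMle : M x y ≤ auxg n (kk (σ x)) (b (σ x)) (D (σ x)) 1 := by
      rw [hMapp]
      exact hmono
    rcases fin2_cases (σ x) with h | h
    · rw [h] at hMle
      linarith
    · rw [h] at hMle
      rw [hg11] at hMle
      linarith
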